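/- For an invertible symmetric matrix A, if all the Euclidean norms of the columns of A⁻¹ are pairwise distinct, then for any matrix B = A.submatrix σ σ (σ a permutation), the permutation σ is uniquely determined by matching column norms: σ(k) is the unique index j with ‖column j of A⁻¹‖ = ‖column k of B⁻¹‖. -/

import Mathlib

theorem stmt_17 {n : ℕ} (A : Matrix (Fin n) (Fin n) ℝ) (hA : IsUnit A.det)
    (hsymm : A.IsSymm)
    (hinj : Function.Injective fun j : Fin n =>
      ‖(WithLp.equiv 2 (Fin n → ℝ)).symm (fun i => A⁻¹ i j)‖)
    (σ : Equiv.Perm (Fin n)) (B : Matrix (Fin n) (Fin n) ℝ)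
    (hB : B = A.submatrix σ σ) (k : Fin n) :
    ‖(WithLp.equiv 2 (Fin n → ℝ)).symm (fun i => A⁻¹ i (σ k))‖ =
      ‖(WithLp.equiv 2 (Fin n → ℝ)).symm (fun i => B⁻¹ i k)‖ ∧
    ∀ j, ‖(WithLp.equiv 2 (Fin n → ℝ)).symm (fun i => A⁻¹ i j)‖ =
        ‖(WithLp.equiv 2 (Fin n → ℝ)).symm (fun i => B⁻¹ i k)‖ → j = σ k := by
  have hBinv : B⁻¹ = A⁻¹.submatrix σ σ := by
    rw [hB, Matrix.inv_submatrix_equiv]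
  have hmain : ‖(WithLp.equiv 2 (Fin n → ℝ)).symm (fun i => A⁻¹ i (σ k))‖ =
      ‖(WithLp.equiv 2 (Fin n → ℝ)).symm (fun i => B⁻¹ i k)‖ := by
    rw [hBinv]
    simp only [EuclideanSpace.norm_eq, Matrix.submatrix_apply, WithLp.equiv_symm_apply, PiLp.toLp_apply]
    congr 1
    exact (Equiv.sum_comp σ fun i => ‖A⁻¹ i (σ k)‖ ^ 2).symm
  exact ⟨hmain, fun j hj => hinj (hj.trans hmain.symm)⟩
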